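/- Let θ ∈ ℂ⁴, let (i,j,k) be a cyclic permutation of (1,2,3), let x ∈ ℂ³ with f(x,θ) = 0, and assume x is not a fixed point of g_j², i.e. it is not the case that y_j(x,θ) = 0 and y_k(x,θ) = 0. Let n > 1 be an integer. Then x is a periodic point of g_j² of prime (minimal) period n — that is, the n-fold iterate of g_j² fixes x while no d-fold iterate with 0 < d < n fixes x — if and only if there exists an integer m with 0 < m < n and gcd(m,n) = 1 such that x_i = 2·cos(πm/n). -/

import Mathlib

/-- The square `g_j²` of the basic transformation attached to a cyclic permutation
`(i,j,k)` of `(1,2,3)`, written in the coordinates `(x_i, x_j, x_k)`. -/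
noncomputable def gjsq (θj θk : ℂ) : ℂ × ℂ × ℂ → ℂ × ℂ × ℂ :=
  fun x => (x.1, θj - x.2.1 - x.1 * (θk - x.2.2 - x.1 * x.2.1),
            θk - x.2.2 - x.1 * x.2.1)

namespace PeriodicCosAux

/-- The affine map induced by `g_j²` on the fiber `x_i = a`. -/
def Tm (a c₁ c₂ : ℂ) : ℂ × ℂ → ℂ × ℂ :=
  fun v => ((a ^ 2 - 1) * v.1 + a * v.2 + c₁, -a * v.1 - v.2 + c₂)

/-- Affine eigen-functional for the eigenvalue `l` of the linear part of `Tm`. -/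
def psi (a c₁ c₂ l : ℂ) (v : ℂ × ℂ) : ℂ :=
  (1 - l) * ((l + 1) * v.1 + a * v.2) - ((l + 1) * c₁ + a * c₂)

lemma psi_step (a c₁ c₂ l : ℂ) (hl : l ^ 2 = (a ^ 2 - 2) * l - 1) (v : ℂ × ℂ) :
    psi a c₁ c₂ l (Tm a c₁ c₂ v) = l * psi a c₁ c₂ l v := by
  simp only [psi, Tm]
  linear_combination (l - 1) * v.1 * hl

lemma psi_iter (a c₁ c₂ l : ℂ) (hl : l ^ 2 = (a ^ 2 - 2) * l - 1) (v : ℂ × ℂ) :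
    ∀ k : ℕ, psi a c₁ c₂ l ((Tm a c₁ c₂)^[k] v) = l ^ k * psi a c₁ c₂ l v
  | 0 => by simp
  | (k + 1) => by
      rw [Function.iterate_succ_apply', psi_step a c₁ c₂ l hl,
        psi_iter a c₁ c₂ l hl v k, pow_succ]
      ring

lemma psi_inj (a c₁ c₂ l m : ℂ) (ha : a ≠ 0) (hlm : l ≠ m) (hl1 : l ≠ 1) (hm1 : m ≠ 1)
    {v w : ℂ × ℂ} (h1 : psi a c₁ c₂ l v = psi a c₁ c₂ l w)
    (h2 : psi a c₁ c₂ m v = psi a c₁ c₂ m w) : v = w := by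
  simp only [psi] at h1 h2
  have e1 : (l + 1) * v.1 + a * v.2 = (l + 1) * w.1 + a * w.2 :=
    mul_left_cancel₀ (sub_ne_zero.mpr (Ne.symm hl1)) (by linear_combination h1)
  have e2 : (m + 1) * v.1 + a * v.2 = (m + 1) * w.1 + a * w.2 :=
    mul_left_cancel₀ (sub_ne_zero.mpr (Ne.symm hm1)) (by linear_combination h2)
  have hu : v.1 = w.1 :=
    mul_left_cancel₀ (sub_ne_zero.mpr hlm) (by linear_combination e1 - e2)
  have hw : v.2 = w.2 := mul_left_cancel₀ ha (by linear_combination e1 - (l + 1) * hu)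
  exact Prod.ext hu hw

lemma psi_ne (a c₁ c₂ l m : ℂ) (ha : a ≠ 0) (hlm : l ≠ m) (hl1 : l ≠ 1) (hm1 : m ≠ 1)
    (hl : l ^ 2 = (a ^ 2 - 2) * l - 1) (hm : m ^ 2 = (a ^ 2 - 2) * m - 1)
    {v : ℂ × ℂ} (hv : Tm a c₁ c₂ v ≠ v) :
    psi a c₁ c₂ l v ≠ 0 ∨ psi a c₁ c₂ m v ≠ 0 := by
  by_contra h
  push_neg at h
  apply hv
  apply psi_inj a c₁ c₂ l m ha hlm hl1 hm1
  · rw [psi_step a c₁ c₂ l hl, h.1, mul_zero]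
  · rw [psi_step a c₁ c₂ m hm, h.2, mul_zero]

lemma parabolic (a c₁ c₂ : ℂ) (h4 : a ^ 2 = 4) (v : ℂ × ℂ) (hv : Tm a c₁ c₂ v ≠ v)
    (n : ℕ) (hn : 0 < n) : (Tm a c₁ c₂)^[n] v ≠ v := by
  intro hfix
  apply hv
  have h2n : (Tm a c₁ c₂)^[2 * n] v = v := by
    rw [two_mul, Function.iterate_add_apply, hfix, hfix]
  have hsp : a = 2 ∨ a = -2 := by
    have h : (a - 2) * (a + 2) = 0 := by linear_combination h4
    rcases mul_eq_zero.mp h with h | h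
    · left; linear_combination h
    · right; linear_combination h
  have hform : ∀ k : ℕ, (Tm a c₁ c₂)^[k] v =
      (v.1 + k * ((a ^ 2 - 2) * v.1 + a * v.2 + c₁)
          + ((k : ℂ) * ((k : ℂ) - 1) / 2) * ((a ^ 2 - 2) * c₁ + a * c₂),
       v.2 + k * (-(a * v.1) - 2 * v.2 + c₂)
          + ((k : ℂ) * ((k : ℂ) - 1) / 2) * (-(a * c₁) - 2 * c₂)) := by
    intro k
    induction k with
    | zero => simp
    | succ k ih =>
        rw [Function.iterate_succ_apply', ih]
        rcases hsp with h | h <;> subst h <;>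
          refine Prod.ext ?_ ?_ <;> simp only [Tm] <;> push_cast <;> ring
  have E := (hform n).symm.trans hfix
  have E' := (hform (2 * n)).symm.trans h2n
  rw [Prod.ext_iff] at E E'
  obtain ⟨E1, E2⟩ := E
  obtain ⟨E1', E2'⟩ := E'
  dsimp only at E1 E2 E1' E2'
  push_cast at E1 E2 E1' E2'
  have hncast : (n : ℂ) ≠ 0 := Nat.cast_ne_zero.mpr (by omega)
  have hB1 : (a ^ 2 - 2) * c₁ + a * c₂ = 0 := by
    have h := mul_eq_zero.mp (show (n : ℂ) ^ 2 * ((a ^ 2 - 2) * c₁ + a * c₂) = 0 by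
      linear_combination E1' - 2 * E1)
    rcases h with h | h
    · exact absurd h (pow_ne_zero 2 hncast)
    · exact h
  have hB2 : -(a * c₁) - 2 * c₂ = 0 := by
    have h := mul_eq_zero.mp (show (n : ℂ) ^ 2 * (-(a * c₁) - 2 * c₂) = 0 by
      linear_combination E2' - 2 * E2)
    rcases h with h | h
    · exact absurd h (pow_ne_zero 2 hncast)
    · exact h
  have hA1 : (a ^ 2 - 2) * v.1 + a * v.2 + c₁ = 0 := by
    have h := mul_eq_zero.mp (show (n : ℂ) * ((a ^ 2 - 2) * v.1 + a * v.2 + c₁) = 0 by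
      linear_combination E1 - ((n : ℂ) * ((n : ℂ) - 1) / 2) * hB1)
    rcases h with h | h
    · exact absurd h hncast
    · exact h
  have hA2 : -(a * v.1) - 2 * v.2 + c₂ = 0 := by
    have h := mul_eq_zero.mp (show (n : ℂ) * (-(a * v.1) - 2 * v.2 + c₂) = 0 by
      linear_combination E2 - ((n : ℂ) * ((n : ℂ) - 1) / 2) * hB2)
    rcases h with h | h
    · exact absurd h hncast
    · exact h
  refine Prod.ext ?_ ?_ <;> simp only [Tm]
  · linear_combination hA1
  · linear_combination hA2

lemma Tsq_a0 (c₁ c₂ : ℂ) (v : ℂ × ℂ) : (Tm 0 c₁ c₂)^[2] v = v := by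
  show Tm 0 c₁ c₂ (Tm 0 c₁ c₂ v) = v
  refine Prod.ext ?_ ?_ <;> simp only [Tm] <;> ring

lemma neg_one_prim : IsPrimitiveRoot (-1 : ℂ) 2 := by
  rw [IsPrimitiveRoot.iff (by norm_num)]
  refine ⟨by norm_num, ?_⟩
  intro l h1 h2
  interval_cases l
  norm_num

/-- Main abstract lemma: exact period `n` for the affine fiber map is equivalent to
the linear part having a primitive `n`-th root of unity as an eigenvalue. -/
lemma key (a c₁ c₂ : ℂ) (v : ℂ × ℂ) (hv : Tm a c₁ c₂ v ≠ v) (n : ℕ) (hn : 1 < n) :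
    ((Tm a c₁ c₂)^[n] v = v ∧ ∀ d : ℕ, 0 < d → d < n → (Tm a c₁ c₂)^[d] v ≠ v) ↔
    ∃ l : ℂ, IsPrimitiveRoot l n ∧ l ^ 2 - (a ^ 2 - 2) * l + 1 = 0 := by
  constructor
  · rintro ⟨hfix, hmin⟩
    by_cases h4 : a ^ 2 = 4
    · exact absurd hfix (parabolic a c₁ c₂ h4 v hv n (by omega))
    by_cases ha : a = 0
    · subst ha
      have hn2 : n = 2 := by
        by_contra h
        exact hmin 2 (by norm_num) (by omega) (Tsq_a0 c₁ c₂ v)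
      subst hn2
      refine ⟨-1, neg_one_prim, by norm_num⟩
    · obtain ⟨s, hs⟩ := IsAlgClosed.exists_pow_nat_eq ((a ^ 2 - 2) ^ 2 - 4)
        (show 0 < 2 by norm_num)
      set l : ℂ := (a ^ 2 - 2 + s) / 2 with hldef
      set m : ℂ := (a ^ 2 - 2 - s) / 2 with hmdef
      have hlq : l ^ 2 = (a ^ 2 - 2) * l - 1 := by
        rw [hldef]; linear_combination hs / 4
      have hmq : m ^ 2 = (a ^ 2 - 2) * m - 1 := by
        rw [hmdef]; linear_combination hs / 4
      have hprod : l * m = 1 := by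
        rw [hldef, hmdef]; linear_combination -hs / 4
      have hs0 : s ≠ 0 := by
        intro h
        rw [h] at hs
        have h' : (a ^ 2 - 4) * a ^ 2 = 0 := by linear_combination -hs
        rcases mul_eq_zero.mp h' with h' | h'
        · exact h4 (by linear_combination h')
        · exact ha ((pow_eq_zero_iff (by norm_num : (2 : ℕ) ≠ 0)).mp h')
      have hlm : l ≠ m := by
        intro h
        apply hs0
        have hlms : l - m = s := by rw [hldef, hmdef]; ring
        rw [h, sub_self] at hlms
        exact hlms.symm
      have hl1 : l ≠ 1 := by
        intro h
        rw [h] at hlq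
        exact h4 (by linear_combination -hlq)
      have hm1 : m ≠ 1 := by
        intro h
        rw [h] at hmq
        exact h4 (by linear_combination -hmq)
      have hpown : l ^ n * m ^ n = 1 := by rw [← mul_pow, hprod, one_pow]
      have hln : l ^ n = 1 := by
        rcases psi_ne a c₁ c₂ l m ha hlm hl1 hm1 hlq hmq hv with h | h
        · have e := psi_iter a c₁ c₂ l hlq v n
          rw [hfix] at e
          have he : (l ^ n - 1) * psi a c₁ c₂ l v = 0 := by linear_combination -e
          rcases mul_eq_zero.mp he with h' | h'
          · linear_combination h'
          · exact absurd h' h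
        · have e := psi_iter a c₁ c₂ m hmq v n
          rw [hfix] at e
          have he : (m ^ n - 1) * psi a c₁ c₂ m v = 0 := by linear_combination -e
          rcases mul_eq_zero.mp he with h' | h'
          · have hmn : m ^ n = 1 := by linear_combination h'
            rw [hmn, mul_one] at hpown
            exact hpown
          · exact absurd h' h
      refine ⟨l, (IsPrimitiveRoot.iff (by omega)).mpr ⟨hln, ?_⟩, by linear_combination hlq⟩
      intro d hd1 hd2 hld
      have hmd : m ^ d = 1 := by
        have hpd : l ^ d * m ^ d = 1 := by rw [← mul_pow, hprod, one_pow]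
        rwa [hld, one_mul] at hpd
      apply hmin d hd1 hd2
      apply psi_inj a c₁ c₂ l m ha hlm hl1 hm1
      · rw [psi_iter a c₁ c₂ l hlq v d, hld, one_mul]
      · rw [psi_iter a c₁ c₂ m hmq v d, hmd, one_mul]
  · rintro ⟨l, hprim, hquad⟩
    have hlq : l ^ 2 = (a ^ 2 - 2) * l - 1 := by linear_combination hquad
    have hl1 : l ≠ 1 := by
      intro h
      rw [h] at hprim
      have := hprim.unique IsPrimitiveRoot.one
      omega
    by_cases ha : a = 0
    · subst ha
      have hlneg : l = -1 := by
        have h : (l + 1) ^ 2 = 0 := by linear_combination hquad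
        have h' := (pow_eq_zero_iff (by norm_num : (2 : ℕ) ≠ 0)).mp h
        linear_combination h'
      rw [hlneg] at hprim
      have hn2 : n = 2 := hprim.unique neg_one_prim
      subst hn2
      refine ⟨Tsq_a0 c₁ c₂ v, ?_⟩
      intro d h1 h2
      have hd1 : d = 1 := by omega
      subst hd1
      simpa using hv
    · set m : ℂ := a ^ 2 - 2 - l with hmdef
      have hmq : m ^ 2 = (a ^ 2 - 2) * m - 1 := by rw [hmdef]; linear_combination hquad
      have hprodlm : l * m = 1 := by rw [hmdef]; linear_combination -hquad
      have hm1 : m ≠ 1 := by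
        intro h
        rw [h, mul_one] at hprodlm
        exact hl1 hprodlm
      have hlm : l ≠ m := by
        intro h
        have hsq : l * l = 1 := by rw [← h] at hprodlm; exact hprodlm
        have h' : (l - 1) * (l + 1) = 0 := by linear_combination hsq
        rcases mul_eq_zero.mp h' with h' | h'
        · exact hl1 (by linear_combination h')
        · have hl : l = -1 := by linear_combination h'
          apply ha
          have h2 : (l : ℂ) = a ^ 2 - 2 - l := by rw [← hmdef]; exact h
          rw [hl] at h2
          have ha2 : a ^ 2 = 0 := by linear_combination -h2
          exact (pow_eq_zero_iff (by norm_num : (2 : ℕ) ≠ 0)).mp ha2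
      have hln : l ^ n = 1 := hprim.pow_eq_one
      have hmn : m ^ n = 1 := by
        have hpd : l ^ n * m ^ n = 1 := by rw [← mul_pow, hprodlm, one_pow]
        rwa [hln, one_mul] at hpd
      constructor
      · apply psi_inj a c₁ c₂ l m ha hlm hl1 hm1
        · rw [psi_iter a c₁ c₂ l hlq v n, hln, one_mul]
        · rw [psi_iter a c₁ c₂ m hmq v n, hmn, one_mul]
      · intro d hd1 hd2 hcon
        have hel := psi_iter a c₁ c₂ l hlq v d
        have hem := psi_iter a c₁ c₂ m hmq v d
        rw [hcon] at hel hem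
        have hd : l ^ d = 1 := by
          rcases psi_ne a c₁ c₂ l m ha hlm hl1 hm1 hlq hmq hv with h | h
          · have he : (l ^ d - 1) * psi a c₁ c₂ l v = 0 := by linear_combination -hel
            rcases mul_eq_zero.mp he with h' | h'
            · linear_combination h'
            · exact absurd h' h
          · have he : (m ^ d - 1) * psi a c₁ c₂ m v = 0 := by linear_combination -hem
            rcases mul_eq_zero.mp he with h' | h'
            · have hmd : m ^ d = 1 := by linear_combination h'
              have hpd : l ^ d * m ^ d = 1 := by rw [← mul_pow, hprodlm, one_pow]
              rwa [hmd, mul_one] at hpd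
            · exact absurd h' h
        have := Nat.le_of_dvd hd1 (hprim.dvd_of_pow_eq_one d hd)
        omega

lemma aux_cos (z : ℂ) :
    Complex.exp (z * Complex.I) + Complex.exp (-(z * Complex.I)) = 2 * Complex.cos z := by
  rw [← neg_mul, Complex.exp_mul_I, Complex.exp_mul_I, Complex.cos_neg, Complex.sin_neg]
  ring

/-- Bridge: eigenvalue condition versus the explicit cosine condition. -/
lemma bridge (a : ℂ) (n : ℕ) (hn : 1 < n) :
    (∃ l : ℂ, IsPrimitiveRoot l n ∧ l ^ 2 - (a ^ 2 - 2) * l + 1 = 0) ↔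
    (∃ m : ℕ, 0 < m ∧ m < n ∧ Nat.gcd m n = 1 ∧
      a = ((2 * Real.cos (Real.pi * m / n) : ℝ) : ℂ)) := by
  constructor
  · rintro ⟨l, hprim, hquad⟩
    rw [Complex.isPrimitiveRoot_iff l n (by omega)] at hprim
    obtain ⟨m, hmn, hg, rfl⟩ := hprim
    have hm0 : 0 < m := by
      rcases Nat.eq_zero_or_pos m with h | h
      · exfalso; subst h; rw [Nat.coprime_zero_left] at hg; omega
      · exact h
    set t : ℝ := Real.pi * m / n with ht
    have hzI : 2 * (Real.pi : ℂ) * Complex.I * ((m : ℂ) / (n : ℂ))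
        = ((2 * t : ℝ) : ℂ) * Complex.I := by
      rw [ht]; push_cast; ring
    have hle : Complex.exp (2 * (Real.pi : ℂ) * Complex.I * ((m : ℂ) / (n : ℂ)))
        * Complex.exp (-(2 * (Real.pi : ℂ) * Complex.I * ((m : ℂ) / (n : ℂ)))) = 1 := by
      rw [← Complex.exp_add, add_neg_cancel, Complex.exp_zero]
    have hsum : Complex.exp (2 * (Real.pi : ℂ) * Complex.I * ((m : ℂ) / (n : ℂ)))
        + Complex.exp (-(2 * (Real.pi : ℂ) * Complex.I * ((m : ℂ) / (n : ℂ))))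
        = ((2 * Real.cos (2 * t) : ℝ) : ℂ) := by
      rw [hzI, aux_cos, ← Complex.ofReal_cos]
      push_cast
      ring
    have hl0 := Complex.exp_ne_zero (2 * (Real.pi : ℂ) * Complex.I * ((m : ℂ) / (n : ℂ)))
    have key2 : a ^ 2 = ((2 * Real.cos (2 * t) : ℝ) : ℂ) + 2 := by
      have h0 : Complex.exp (2 * (Real.pi : ℂ) * Complex.I * ((m : ℂ) / (n : ℂ)))
          * (a ^ 2 - (((2 * Real.cos (2 * t) : ℝ) : ℂ) + 2)) = 0 := by
        linear_combination -hquad - hle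
          + Complex.exp (2 * (Real.pi : ℂ) * Complex.I * ((m : ℂ) / (n : ℂ))) * hsum
      rcases mul_eq_zero.mp h0 with h | h
      · exact absurd h hl0
      · linear_combination h
    have key3 : a ^ 2 = ((2 * Real.cos t : ℝ) : ℂ) ^ 2 := by
      rw [key2, show (2 * Real.cos (2 * t) : ℝ) = (2 * Real.cos t) ^ 2 - 2 from by
        rw [Real.cos_two_mul]; ring]
      push_cast
      ring
    have hfac : (a - ((2 * Real.cos t : ℝ) : ℂ)) * (a + ((2 * Real.cos t : ℝ) : ℂ)) = 0 := by
      linear_combination key3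
    rcases mul_eq_zero.mp hfac with h | h
    · exact ⟨m, hm0, hmn, hg, by linear_combination h⟩
    · refine ⟨n - m, by omega, by omega, (Nat.coprime_self_sub_left hmn.le).mpr hg, ?_⟩
      have harg : Real.pi * ((n - m : ℕ) : ℝ) / n = Real.pi - Real.pi * m / n := by
        rw [Nat.cast_sub hmn.le]
        have hn0 : (n : ℝ) ≠ 0 := Nat.cast_ne_zero.mpr (by omega)
        field_simp
      rw [harg, Real.cos_pi_sub, ← ht]
      push_cast at h ⊢
      linear_combination h
  · rintro ⟨m, hm0, hmn, hg, rfl⟩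
    refine ⟨Complex.exp (2 * (Real.pi : ℂ) * Complex.I * ((m : ℂ) / (n : ℂ))),
      Complex.isPrimitiveRoot_exp_of_coprime m n (by omega) hg, ?_⟩
    set t : ℝ := Real.pi * m / n with ht
    have hzI : 2 * (Real.pi : ℂ) * Complex.I * ((m : ℂ) / (n : ℂ))
        = ((2 * t : ℝ) : ℂ) * Complex.I := by
      rw [ht]; push_cast; ring
    have hle : Complex.exp (2 * (Real.pi : ℂ) * Complex.I * ((m : ℂ) / (n : ℂ)))
        * Complex.exp (-(2 * (Real.pi : ℂ) * Complex.I * ((m : ℂ) / (n : ℂ)))) = 1 := by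
      rw [← Complex.exp_add, add_neg_cancel, Complex.exp_zero]
    have hsum : Complex.exp (2 * (Real.pi : ℂ) * Complex.I * ((m : ℂ) / (n : ℂ)))
        + Complex.exp (-(2 * (Real.pi : ℂ) * Complex.I * ((m : ℂ) / (n : ℂ))))
        = ((2 * Real.cos (2 * t) : ℝ) : ℂ) := by
      rw [hzI, aux_cos, ← Complex.ofReal_cos]
      push_cast
      ring
    have hae : ((2 * Real.cos t : ℝ) : ℂ) ^ 2 - 2
        = Complex.exp (2 * (Real.pi : ℂ) * Complex.I * ((m : ℂ) / (n : ℂ)))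
          + Complex.exp (-(2 * (Real.pi : ℂ) * Complex.I * ((m : ℂ) / (n : ℂ)))) := by
      rw [hsum, show (2 * Real.cos (2 * t) : ℝ) = (2 * Real.cos t) ^ 2 - 2 from by
        rw [Real.cos_two_mul]; ring]
      push_cast
      ring
    linear_combination -hle
      - Complex.exp (2 * (Real.pi : ℂ) * Complex.I * ((m : ℂ) / (n : ℂ))) * hae

end PeriodicCosAux

open PeriodicCosAux in
/-- A non-fixed point `x` of `g_j²` on the cubic surface `S(θ)` is a periodic point of
prime (minimal) period `n > 1` if and only if `x_i = 2 cos(πm/n)` for some `0 < m < n`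
coprime to `n`. -/
theorem periodic_point_iff_cos
    (θi θj θk θ4 xi xj xk : ℂ) (n : ℕ) (hn : 1 < n)
    (hf : xi * xj * xk + xi ^ 2 + xj ^ 2 + xk ^ 2
      - θi * xi - θj * xj - θk * xk + θ4 = 0)
    (hnotfix : ¬(2 * xj + xk * xi - θj = 0 ∧ 2 * xk + xi * xj - θk = 0)) :
    ((gjsq θj θk)^[n] (xi, xj, xk) = (xi, xj, xk) ∧
      ∀ d : ℕ, 0 < d → d < n → (gjsq θj θk)^[d] (xi, xj, xk) ≠ (xi, xj, xk)) ↔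
    (∃ m : ℕ, 0 < m ∧ m < n ∧ Nat.gcd m n = 1 ∧
      xi = ((2 * Real.cos (Real.pi * m / n) : ℝ) : ℂ)) := by
  have hstep : ∀ w : ℂ × ℂ,
      gjsq θj θk (xi, w) = (xi, Tm xi (θj - xi * θk) θk w) := by
    intro w
    simp only [gjsq, Tm]
    exact Prod.ext rfl (Prod.ext (by ring) (by ring))
  have hTrans : ∀ (k : ℕ) (w : ℂ × ℂ),
      (gjsq θj θk)^[k] (xi, w) = (xi, (Tm xi (θj - xi * θk) θk)^[k] w) := by
    intro k
    induction k with
    | zero => intro w; simp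
    | succ k ih =>
        intro w
        rw [Function.iterate_succ_apply', Function.iterate_succ_apply', ih, hstep]
  have hv : Tm xi (θj - xi * θk) θk (xj, xk) ≠ (xj, xk) := by
    intro h
    apply hnotfix
    rw [Prod.ext_iff] at h
    obtain ⟨h1, h2⟩ := h
    simp only [Tm] at h1 h2
    constructor
    · linear_combination -h1 - xi * h2
    · linear_combination -h2
  have hiff : ∀ k : ℕ, ((gjsq θj θk)^[k] (xi, xj, xk) = (xi, xj, xk) ↔
      (Tm xi (θj - xi * θk) θk)^[k] (xj, xk) = (xj, xk)) := by
    intro k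
    constructor
    · intro h
      exact congrArg Prod.snd ((hTrans k (xj, xk)).symm.trans h)
    · intro h
      rw [hTrans k (xj, xk), h]
  simp only [ne_eq, hiff]
  exact (key xi (θj - xi * θk) θk (xj, xk) hv n hn).trans (bridge xi n hn)
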